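/- Let p ∈ [0,1], let (Z_i)_{i∈ℕ} be an i.i.d. sequence of Bernoulli(p) random variables on a probability space Ω, and let μ̂_n = (1/n)∑_{i=1}^n Z_i. Let d ∈ ℝ with p ≠ d, and let Δ > 0 and δ₀ > 0. Then there exists n₀ ∈ ℕ such that for all n ≥ n₀, with probability at least 1 − δ₀, the following holds: if p > d then μ̂_n − d ≥ ε(Δ, n), and if p < d then μ̂_n − d ≤ −ε(Δ, n). -/

import Mathlib

open MeasureTheory ProbabilityTheory Filter

/-- The adaptive confidence radius
`ε(δ,n) = sqrt(((3/5)·log(log_{11/10}(n) + 1) + (5/9)·log(24/δ))/n)`. -/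
noncomputable def eps (δ : ℝ) (n : ℕ) : ℝ :=
  Real.sqrt (((3 / 5) * Real.log (Real.log n / Real.log (11 / 10) + 1)
      + (5 / 9) * Real.log (24 / δ)) / n)

/-- The empirical mean `μ̂_n = (1/n) ∑_{i=1}^n Z_i`. -/
noncomputable def muhat {Ω : Type*} (Z : ℕ → Ω → ℝ) (n : ℕ) (ω : Ω) : ℝ :=
  (1 / n : ℝ) * ∑ i ∈ Finset.Icc 1 n, Z i ω

lemma log_div_tendsto : Tendsto (fun n : ℕ => Real.log n / n) atTop (nhds 0) :=
  (Real.isLittleO_log_id_atTop.tendsto_div_nhds_zero).comp tendsto_natCast_atTop_atTop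

lemma eps_tendsto (δ : ℝ) : Tendsto (fun n => eps δ n) atTop (nhds 0) := by
  have L : (0:ℝ) < Real.log (11/10) := Real.log_pos (by norm_num)
  have h1 : Tendsto (fun n : ℕ =>
      ((3 / 5) * Real.log (Real.log n / Real.log (11 / 10) + 1)
      + (5 / 9) * Real.log (24 / δ)) / n) atTop (nhds 0) := by
    have hsq : Tendsto (fun n : ℕ =>
        (3/5) * Real.log (Real.log n / Real.log (11 / 10) + 1) / n) atTop (nhds 0) := by
      have hup : Tendsto (fun n : ℕ => (3/5) / Real.log (11/10) * (Real.log n / n))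
          atTop (nhds 0) := by
        simpa using log_div_tendsto.const_mul ((3/5) / Real.log (11/10))
      apply tendsto_of_tendsto_of_tendsto_of_le_of_le' tendsto_const_nhds hup ?_ ?_
      · filter_upwards [eventually_ge_atTop 1] with n hn
        have hln : (0:ℝ) ≤ Real.log n := Real.log_natCast_nonneg n
        have h2 : (0:ℝ) ≤ Real.log (Real.log n / Real.log (11 / 10) + 1) :=
          Real.log_nonneg (by have := div_nonneg hln L.le; linarith)
        positivity
      · filter_upwards [eventually_ge_atTop 1] with n hn
        have hln : (0:ℝ) ≤ Real.log n := Real.log_natCast_nonneg n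
        have hb : Real.log (Real.log n / Real.log (11 / 10) + 1)
            ≤ Real.log n / Real.log (11/10) := by
          have := Real.log_le_sub_one_of_pos
            (x := Real.log n / Real.log (11 / 10) + 1) (by positivity)
          linarith
        have hn0 : (0:ℝ) < n := by exact_mod_cast hn
        have key : (3/5) * Real.log (Real.log n / Real.log (11 / 10) + 1)
            ≤ (3/5) / Real.log (11/10) * Real.log n := by
          have h35 : (0:ℝ) ≤ 3/5 := by norm_num
          calc (3/5) * Real.log (Real.log n / Real.log (11 / 10) + 1)
              ≤ (3/5) * (Real.log n / Real.log (11/10)) := by nlinarith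
            _ = (3/5) / Real.log (11/10) * Real.log n := by ring
        have hrw : (3/5) / Real.log (11/10) * (Real.log n / n)
            = ((3/5) / Real.log (11/10) * Real.log n) / n := by ring
        rw [hrw]
        gcongr
    have hc : Tendsto (fun n : ℕ => (5/9) * Real.log (24 / δ) / n) atTop (nhds 0) :=
      tendsto_const_div_atTop_nhds_zero_nat _
    have := hsq.add hc
    simpa [add_div] using this
  have := (Real.continuous_sqrt.tendsto 0).comp h1
  simpa only [eps, Function.comp_def, Real.sqrt_zero] using this

lemma Z_eq_indicator {Ω : Type*} {Z : ℕ → Ω → ℝ}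
    (hval : ∀ i ω, Z i ω = 0 ∨ Z i ω = 1) (i : ℕ) :
    Z i = Set.indicator {ω | Z i ω = 1} (fun _ => (1:ℝ)) := by
  funext ω
  rcases hval i ω with h | h
  · rw [h, Set.indicator_of_notMem]
    simp [Set.mem_setOf_eq, h]
  · rw [h, Set.indicator_of_mem]
    exact h

lemma Z_memLp {Ω : Type*} [MeasurableSpace Ω] (μ : Measure Ω) [IsProbabilityMeasure μ]
    {Z : ℕ → Ω → ℝ} (hmeas : ∀ i, Measurable (Z i))
    (hval : ∀ i ω, Z i ω = 0 ∨ Z i ω = 1) (i : ℕ) : MemLp (Z i) 2 μ := by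
  rw [Z_eq_indicator hval i]
  exact memLp_indicator_const 2 ((hmeas i) (measurableSet_singleton 1)) 1
    (Or.inr (measure_ne_top μ _))

lemma Z_integral {Ω : Type*} [MeasurableSpace Ω] (μ : Measure Ω) [IsProbabilityMeasure μ]
    {p : ℝ} (hp : p ∈ Set.Icc (0 : ℝ) 1) {Z : ℕ → Ω → ℝ}
    (hmeas : ∀ i, Measurable (Z i)) (hval : ∀ i ω, Z i ω = 0 ∨ Z i ω = 1)
    (hbern : ∀ i, μ {ω | Z i ω = 1} = ENNReal.ofReal p) (i : ℕ) : μ[Z i] = p := by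
  rw [Z_eq_indicator hval i, integral_indicator_const (1:ℝ)
    (show MeasurableSet {ω | Z i ω = 1} from (hmeas i) (measurableSet_singleton 1)),
    measureReal_def, hbern i, smul_eq_mul, mul_one,
    ENNReal.toReal_ofReal hp.1]

lemma Z_variance {Ω : Type*} [MeasurableSpace Ω] (μ : Measure Ω) [IsProbabilityMeasure μ]
    {p : ℝ} (hp : p ∈ Set.Icc (0 : ℝ) 1) {Z : ℕ → Ω → ℝ}
    (hmeas : ∀ i, Measurable (Z i)) (hval : ∀ i ω, Z i ω = 0 ∨ Z i ω = 1)
    (hbern : ∀ i, μ {ω | Z i ω = 1} = ENNReal.ofReal p) (i : ℕ) :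
    variance (Z i) μ = p - p ^ 2 := by
  have hsq : Z i ^ 2 = Z i := by
    funext ω
    rcases hval i ω with h | h <;> simp [h]
  rw [variance_eq_sub (Z_memLp μ hmeas hval i), hsq, Z_integral μ hp hmeas hval hbern i]


/-- Inference-termination lemma for the atomic specification `μ_Z ≥ d`, under the
well-definedness assumption `p ≠ d`: eventually, with probability at least `1 − δ₀`,
the empirical mean separates from the threshold `d` by more than the confidence
radius, on the correct side. -/
theorem eventually_separates
    {Ω : Type*} [MeasurableSpace Ω] (μ : Measure Ω) [IsProbabilityMeasure μ]
    (p : ℝ) (hp : p ∈ Set.Icc (0 : ℝ) 1)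
    (Z : ℕ → Ω → ℝ)
    (hmeas : ∀ i, Measurable (Z i))
    (hindep : iIndepFun Z μ)
    (hval : ∀ i ω, Z i ω = 0 ∨ Z i ω = 1)
    (hbern : ∀ i, μ {ω | Z i ω = 1} = ENNReal.ofReal p)
    (d : ℝ) (hpd : p ≠ d) (Δ : ℝ) (hΔ : 0 < Δ) (δ₀ : ℝ) (hδ₀ : 0 < δ₀) :
    ∃ n₀ : ℕ, ∀ n ≥ n₀,
      1 - ENNReal.ofReal δ₀
        ≤ μ {ω | (p > d → muhat Z n ω - d ≥ eps Δ n)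
              ∧ (p < d → muhat Z n ω - d ≤ -eps Δ n)} := by
  have habs : (0:ℝ) < |p - d| := abs_pos.mpr (sub_ne_zero.mpr hpd)
  set t : ℝ := |p - d| / 2 with ht_def
  have ht : 0 < t := by positivity
  obtain ⟨n₁, hn₁⟩ := eventually_atTop.1 ((eps_tendsto Δ).eventually (gt_mem_nhds ht))
  refine ⟨max n₁ (max 1 ⌈1/(4*δ₀*t^2)⌉₊), fun n hn => ?_⟩
  have hne : eps Δ n < t := hn₁ n (le_trans (le_max_left _ _) hn)
  have hn1 : 1 ≤ n := le_trans (le_trans (le_max_left _ _) (le_max_right _ _)) hn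
  have hnR : 1/(4*δ₀*t^2) ≤ (n:ℝ) := by
    refine le_trans (Nat.le_ceil _) ?_
    exact_mod_cast le_trans (le_trans (le_max_right _ _) (le_max_right _ _)) hn
  have hn0 : (0:ℝ) < n := by exact_mod_cast hn1
  set X : Ω → ℝ := ∑ i ∈ Finset.Icc 1 n, Z i with hX_def
  have hXmem : MemLp X 2 μ := memLp_finset_sum' _ (fun i _ => Z_memLp μ hmeas hval i)
  have hEX : μ[X] = n * p := by
    rw [hX_def]
    simp only [Finset.sum_apply]
    rw [integral_finset_sum _
      (fun i _ => (Z_memLp μ hmeas hval i).integrable one_le_two)]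
    simp [Z_integral μ hp hmeas hval hbern, Nat.card_Icc, mul_comm]
  have hVar : variance X μ = n * (p - p ^ 2) := by
    rw [hX_def, IndepFun.variance_sum (fun i _ => Z_memLp μ hmeas hval i)
      (fun i _ j _ hij => hindep.indepFun hij)]
    simp [Z_variance μ hp hmeas hval hbern, Nat.card_Icc, mul_comm]; ring
  have hcheb := meas_ge_le_variance_div_sq (μ := μ) hXmem
    (show (0:ℝ) < (n:ℝ)*t by positivity)
  rw [hEX, hVar] at hcheb
  have hbound : (n:ℝ) * (p - p ^ 2) / ((n:ℝ)*t)^2 ≤ δ₀ := by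
    have h4 : 1 ≤ (n:ℝ) * (4*δ₀*t^2) := (div_le_iff₀ (by positivity)).1 hnR
    have hp1 : p - p^2 ≤ 1/4 := by nlinarith [sq_nonneg (p - 1/2)]
    have hp0 : 0 ≤ p - p^2 := by nlinarith [hp.1, hp.2]
    rw [div_le_iff₀ (by positivity)]
    nlinarith [mul_le_mul_of_nonneg_left hp1 hn0.le, sq_nonneg ((n:ℝ)*t)]
  have hbad : μ {ω | (n:ℝ)*t ≤ |X ω - (n:ℝ)*p|} ≤ ENNReal.ofReal δ₀ :=
    le_trans hcheb (ENNReal.ofReal_le_ofReal hbound)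
  have hXm : Measurable X := by
    have : X = fun a => ∑ i ∈ Finset.Icc 1 n, Z i a := by
      funext a; rw [hX_def]; exact Finset.sum_apply a _ _
    rw [this]; exact Finset.measurable_sum _ (fun i _ => hmeas i)
  have hbadm : MeasurableSet {ω | (n:ℝ)*t ≤ |X ω - (n:ℝ)*p|} :=
    measurableSet_le measurable_const ((hXm.sub measurable_const).abs)
  have hsub : {ω | (n:ℝ)*t ≤ |X ω - (n:ℝ)*p|}ᶜ ⊆
      {ω | (p > d → muhat Z n ω - d ≥ eps Δ n)
        ∧ (p < d → muhat Z n ω - d ≤ -eps Δ n)} := by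
    intro ω hω
    simp only [Set.mem_compl_iff, Set.mem_setOf_eq, not_le] at hω
    have hXω : X ω = ∑ i ∈ Finset.Icc 1 n, Z i ω := by
      rw [hX_def]; exact Finset.sum_apply ω _ _
    have hmuh : muhat Z n ω - p = (X ω - (n:ℝ)*p)/n := by
      rw [muhat, hXω]; field_simp
    have hmu : |muhat Z n ω - p| < t := by
      rw [hmuh, abs_div, abs_of_pos hn0, div_lt_iff₀ hn0]
      linarith [hω]
    have hmu' := abs_lt.1 hmu
    constructor
    · intro hgt
      have h2t : p - d = 2*t := by
        rw [ht_def, abs_of_pos (sub_pos.2 hgt)]; ring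
      have : muhat Z n ω - d ≥ t := by linarith [hmu'.1]
      linarith
    · intro hlt
      have h2t : d - p = 2*t := by
        rw [ht_def, abs_of_neg (sub_neg.2 hlt)]; ring
      have : muhat Z n ω - d ≤ -t := by linarith [hmu'.2]
      linarith
  calc 1 - ENNReal.ofReal δ₀
      ≤ 1 - μ {ω | (n:ℝ)*t ≤ |X ω - (n:ℝ)*p|} := tsub_le_tsub_left hbad 1
    _ = μ ({ω | (n:ℝ)*t ≤ |X ω - (n:ℝ)*p|}ᶜ) := (prob_compl_eq_one_sub hbadm).symm
    _ ≤ _ := measure_mono hsub
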